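/- Let p be a prime and let (X,R) be a finite p-regular presentation of a group G (X and R finite, every element of R non-trivial). Then there exist a normal subgroup H of G of p-power index and a finite presentation of H with g generators and r relators such that g − r − 1 ≥ [G:H] · def_p(X,R); in particular, def(H) − 1 ≥ [G:H] · def_p(X,R), where def(H) is the deficiency of H (the supremum over finite presentations of H of the number of generators minus the number of relators). -/

import Mathlib

/-- `epIn p S w`: the largest natural number `e` such that `w` has a `p^e`-th root
belonging to the subgroup `S` of the free group.  For `S = ⊤` this is `e_p(w, F)`. -/
noncomputable def epIn {X : Type*} (p : ℕ) (S : Subgroup (FreeGroup X)) (w : FreeGroup X) : ℕ :=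
  sSup {e : ℕ | ∃ v ∈ S, v ^ p ^ e = w}


open Subgroup

lemma epIn_exists_root (p : ℕ) {X : Type*} (w : FreeGroup X) :
    ∃ v : FreeGroup X, v ^ p ^ epIn p (⊤ : Subgroup (FreeGroup X)) w = w := by
  have h0 : 0 ∈ {e : ℕ | ∃ v ∈ (⊤ : Subgroup (FreeGroup X)), v ^ p ^ e = w} :=
    ⟨w, mem_top w, by simp⟩
  by_cases hb : BddAbove {e : ℕ | ∃ v ∈ (⊤ : Subgroup (FreeGroup X)), v ^ p ^ e = w}
  · obtain ⟨v, -, hv⟩ := Nat.sSup_mem ⟨0, h0⟩ hb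
    exact ⟨v, hv⟩
  · have h : epIn p (⊤ : Subgroup (FreeGroup X)) w = 0 := by
      rw [epIn, csSup_of_not_bddAbove hb, csSup_empty]; rfl
    exact ⟨w, by rw [h, pow_zero, pow_one]⟩

lemma index_inf_prime_pow {G : Type*} [Group G] {p : ℕ} (hp : p.Prime) {A B : Subgroup G}
    [A.Normal] (hA : ∃ k, A.index = p ^ k) (hB : ∃ k, B.index = p ^ k) :
    ∃ k, (A ⊓ B).index = p ^ k := by
  obtain ⟨a, ha⟩ := hA; obtain ⟨b, hb⟩ := hB
  have h1 : (A ⊓ B).index = A.relIndex B * B.index := by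
    rw [← inf_relIndex_right, relIndex_mul_index inf_le_right]
  have h2 : (A ⊓ B).index ∣ p ^ (a + b) := by
    rw [h1, pow_add, ← ha, ← hb]
    exact mul_dvd_mul (relIndex_dvd_index_of_normal A B) dvd_rfl
  obtain ⟨k, -, hk⟩ := (Nat.dvd_prime_pow hp).mp h2
  exact ⟨k, hk⟩

lemma finset_inf_normal {α : Type*} {G : Type*} [Group G] (s : Finset α) (N : α → Subgroup G)
    (h : ∀ a, (N a).Normal) : (s.inf N).Normal := by
  induction s using Finset.cons_induction with
  | empty => rw [Finset.inf_empty]; infer_instance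
  | cons a s ha ih =>
    rw [Finset.inf_cons]
    refine { conj_mem := fun x hx g => mem_inf.mpr ?_ }
    exact ⟨(h a).conj_mem _ (mem_inf.mp hx).1 g, ih.conj_mem _ (mem_inf.mp hx).2 g⟩

lemma finset_inf_index_prime_pow {α : Type*} {G : Type*} [Group G] {p : ℕ} (hp : p.Prime)
    (s : Finset α) (N : α → Subgroup G) (hn : ∀ a, (N a).Normal)
    (h : ∀ a, ∃ k, (N a).index = p ^ k) : ∃ k, (s.inf N).index = p ^ k := by
  induction s using Finset.cons_induction with
  | empty => exact ⟨0, by rw [Finset.inf_empty, pow_zero, index_top]⟩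
  | cons a s ha ih =>
    rw [Finset.inf_cons]
    haveI := hn a
    exact index_inf_prime_pow hp (h a) ih


abbrev C2 := Multiplicative (ZMod 2)

lemma card_C2 : Nat.card C2 = 2 := by
  rw [Nat.card_congr Multiplicative.toAdd, Nat.card_zmod]

noncomputable def evalHom {ι : Type*} (w : FreeGroup ι) : (ι → C2) →* C2 :=
  MonoidHom.mk' (fun f => FreeGroup.lift f w) (by
    intro f g
    have h : FreeGroup.lift (f * g) = (FreeGroup.lift f) * (FreeGroup.lift g) := by
      apply FreeGroup.ext_hom
      intro x
      simp [MonoidHom.mul_apply]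
    show FreeGroup.lift (f * g) w = FreeGroup.lift f w * FreeGroup.lift g w
    rw [h, MonoidHom.mul_apply])

@[simp] lemma evalHom_apply {ι : Type*} (w : FreeGroup ι) (f : ι → C2) :
    evalHom w f = FreeGroup.lift f w := rfl

lemma index_finset_inf_le {α G : Type*} [Group G] (s : Finset α) (f : α → Subgroup G) (B : ℕ)
    (hB : 1 ≤ B) (h : ∀ a, (f a).index ≤ B) : (s.inf f).index ≤ B ^ s.card := by
  classical
  induction s using Finset.cons_induction with
  | empty => simp [index_top]
  | cons a s ha ih =>
    rw [Finset.inf_cons, Finset.card_cons, pow_succ]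
    calc (f a ⊓ s.inf f).index ≤ (f a).index * (s.inf f).index := index_inf_le
      _ ≤ B * B ^ s.card := Nat.mul_le_mul (h a) ih
      _ = B ^ s.card * B := mul_comm _ _

lemma index_ker_le_two {G : Type*} [Group G] (f : G →* C2) :
    (MonoidHom.ker f).index ≤ 2 := by
  have h1 : (MonoidHom.ker f).index = Nat.card f.range := Subgroup.index_ker f
  have h2 : Nat.card f.range ≤ Nat.card C2 :=
    Nat.card_le_card_of_injective _ Subtype.val_injective
  rw [h1]
  exact le_trans h2 (le_of_eq card_C2)

lemma deficiency_bddAbove {H : Type*} [Group H] (g₀ : ℕ) (φ₀ : FreeGroup (Fin g₀) →* H)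
    (hφ₀ : Function.Surjective φ₀) :
    BddAbove {d : ℝ | ∃ (g : ℕ) (Rel : Finset (FreeGroup (Fin g))) (φ : FreeGroup (Fin g) →* H),
      Function.Surjective φ ∧
      MonoidHom.ker φ = Subgroup.normalClosure (Rel : Set (FreeGroup (Fin g))) ∧
      d = (g : ℝ) - Rel.card} := by
  classical
  have hinj0 : Function.Injective
      (fun (ψ : H →* C2) => (fun i => ψ (φ₀ (FreeGroup.of i)) : Fin g₀ → C2)) := by
    intro ψ ψ' hpsi
    have h1 : ψ.comp φ₀ = ψ'.comp φ₀ := by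
      apply FreeGroup.ext_hom
      intro i
      exact congrFun hpsi i
    ext h
    obtain ⟨x, rfl⟩ := hφ₀ h
    exact DFunLike.congr_fun h1 x
  haveI : Finite (H →* C2) := Finite.of_injective _ hinj0
  refine ⟨(Nat.card (H →* C2) : ℝ), fun d hd => ?_⟩
  obtain ⟨g, Rel, φ, hsurj, hk, rfl⟩ := hd
  set A := Nat.card (H →* C2) with hA
  set V : Subgroup (Fin g → C2) := Rel.inf (fun w => MonoidHom.ker (evalHom w)) with hV
  have hVmem : ∀ f : Fin g → C2, f ∈ V → ∀ w ∈ Rel, FreeGroup.lift f w = 1 := by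
    intro f hf w hw
    rw [hV, Finset.inf_eq_iInf] at hf
    have := Subgroup.mem_iInf.mp hf w
    have := Subgroup.mem_iInf.mp this hw
    simpa using this
  have hVindex : V.index ≤ 2 ^ Rel.card :=
    index_finset_inf_le _ _ 2 one_le_two fun w => index_ker_le_two _
  have hcards : (2 : ℕ) ^ g = V.index * Nat.card V := by
    have h1 : Nat.card (Fin g → C2) = Nat.card ((Fin g → C2) ⧸ V) * Nat.card V :=
      Subgroup.card_eq_card_quotient_mul_card_subgroup V
    have h2 : Nat.card (Fin g → C2) = 2 ^ g := by
      rw [Nat.card_fun, card_C2, Nat.card_eq_fintype_card, Fintype.card_fin]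
    rw [← h2, h1, ← Subgroup.index_eq_card]
  -- injection from V to Hom(H, C2)
  have hVA : Nat.card V ≤ A := by
    have key : ∀ fv : ↥V, ∃ ψ : H →* C2, ∀ x : FreeGroup (Fin g),
        ψ (φ x) = FreeGroup.lift (fv : Fin g → C2) x := by
      intro fv
      have hle : MonoidHom.ker φ ≤ MonoidHom.ker (FreeGroup.lift (fv : Fin g → C2)) := by
        rw [hk]
        refine Subgroup.normalClosure_le_normal ?_
        intro w hw
        exact hVmem _ fv.2 w hw
      refine ⟨(QuotientGroup.lift (MonoidHom.ker φ) (FreeGroup.lift (fv : Fin g → C2)) hle).comp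
        (QuotientGroup.quotientKerEquivOfSurjective φ hsurj).symm.toMonoidHom, ?_⟩
      intro x
      have hsymm : (QuotientGroup.quotientKerEquivOfSurjective φ hsurj).symm (φ x) =
          QuotientGroup.mk x := by
        apply (QuotientGroup.quotientKerEquivOfSurjective φ hsurj).injective
        rw [MulEquiv.apply_symm_apply]
        rfl
      simp [hsymm]
    choose Ψ hΨ using key
    have hinj : Function.Injective Ψ := by
      intro fv fv' hfe
      apply Subtype.ext
      funext i
      have e1 : (fv : Fin g → C2) i = Ψ fv (φ (FreeGroup.of i)) := by rw [hΨ]; simp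
      have e2 : (fv' : Fin g → C2) i = Ψ fv' (φ (FreeGroup.of i)) := by rw [hΨ]; simp
      rw [e1, e2, hfe]
    exact Nat.card_le_card_of_injective Ψ hinj
  -- final arithmetic
  have hfinal : (2 : ℕ) ^ g ≤ 2 ^ Rel.card * A :=
    hcards ▸ Nat.mul_le_mul hVindex hVA
  rcases le_or_gt g Rel.card with hgr | hgr
  · have : (g : ℝ) - Rel.card ≤ 0 := by
      have := (Nat.cast_le (α := ℝ)).mpr hgr
      linarith
    have : (0:ℝ) ≤ A := Nat.cast_nonneg _
    linarith
  · set k := g - Rel.card with hkdef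
    have hgk : g = Rel.card + k := by omega
    have h2k : 2 ^ k ≤ A := by
      have : 2 ^ Rel.card * 2 ^ k ≤ 2 ^ Rel.card * A := by
        rw [← pow_add, ← hgk]; exact hfinal
      exact Nat.le_of_mul_le_mul_left this (pow_pos (by norm_num) _)
    have hkA : k ≤ A := le_trans (Nat.le_of_lt (Nat.lt_two_pow_self (n := k))) h2k
    have hkA' : ((k : ℕ) : ℝ) ≤ (A : ℝ) := Nat.cast_le.mpr hkA
    have hg' : (g : ℝ) = (Rel.card : ℝ) + (k : ℝ) := by exact_mod_cast congrArg (Nat.cast (R := ℝ)) hgk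
    linarith



lemma comm_aux {M : Type*} [CommGroup M] (U V m : M) : (U * m⁻¹) * (V * U⁻¹) = V * m⁻¹ := by
  rw [mul_mul_mul_comm, mul_comm m⁻¹ U⁻¹, mul_mul_mul_comm, mul_inv_cancel, one_mul]

/-- The action of a group `Q` on functions `Q → C` by translating the domain. -/
def funAut (C : Type*) [CommGroup C] (Q : Type*) [Group Q] : Q →* MulAut (Q → C) where
  toFun q :=
    { toFun := fun m x => m (q⁻¹ * x)
      invFun := fun m x => m (q * x)
      left_inv := fun m => by funext x; simp [← mul_assoc]
      right_inv := fun m => by funext x; simp [← mul_assoc]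
      map_mul' := fun m m' => rfl }
  map_one' := by ext m x; simp
  map_mul' := fun a b => by ext m x; simp [mul_assoc]

section RankBound

variable {X : Type} [Finite X] (K : Subgroup (FreeGroup X)) [K.Normal]

lemma generators_bound (hK : K.index ≠ 0) :
    Finite (IsFreeGroup.Generators ↥K) ∧
      K.index * Nat.card X + 1 ≤ Nat.card (IsFreeGroup.Generators ↥K) + K.index := by
  classical
  set Q := FreeGroup X ⧸ K with hQ
  haveI : Finite Q := by
    refine Nat.finite_of_card_ne_zero ?_
    rw [← Subgroup.index_eq_card]; exact hK
  set M := Q → C2 with hM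
  set mkQ : FreeGroup X →* Q := QuotientGroup.mk' K with hmkQ
  set φA : FreeGroup X →* MulAut M := (funAut C2 Q).comp mkQ with hφA
  have φA_apply : ∀ (f : FreeGroup X) (m : M) (x : Q), φA f m x = m ((mkQ f)⁻¹ * x) :=
    fun f m x => rfl
  have φA_autmul : ∀ (a b : FreeGroup X) (m : M), φA a (φA b m) = φA (a * b) m := by
    intro a b m
    rw [map_mul]
    rfl
  -- the 1-cocycle attached to `c : X → M`
  set Φ : (X → M) → (FreeGroup X →* M ⋊[φA] FreeGroup X) :=
    fun c => FreeGroup.lift (fun x => ⟨c x, FreeGroup.of x⟩) with hΦ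
  have hright : ∀ c f, (Φ c f).right = f := by
    intro c f
    have : SemidirectProduct.rightHom.comp (Φ c) = MonoidHom.id (FreeGroup X) := by
      apply FreeGroup.ext_hom
      intro x
      simp [hΦ]
    exact DFunLike.congr_fun this f
  set d : (X → M) → FreeGroup X → M := fun c f => (Φ c f).left with hd
  have dmul : ∀ c f f', d c (f * f') = d c f * φA f (d c f') := by
    intro c f f'
    show (Φ c (f * f')).left = _
    rw [map_mul, SemidirectProduct.mul_left, hright]
  have dof : ∀ c x, d c (FreeGroup.of x) = c x := by
    intro c x
    show (Φ c (FreeGroup.of x)).left = c x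
    rw [hΦ]
    simp
  have done_ : ∀ c, d c 1 = 1 := by
    intro c
    show (Φ c 1).left = 1
    rw [map_one]
    rfl
  have dinv : ∀ c f, d c f⁻¹ = (φA f⁻¹ (d c f))⁻¹ := by
    intro c f
    have h := dmul c f⁻¹ f
    rw [inv_mul_cancel, done_] at h
    exact eq_inv_of_mul_eq_one_left h.symm
  have hmkK : ∀ k : ↥K, mkQ (k : FreeGroup X) = 1 := by
    intro k
    exact (QuotientGroup.eq_one_iff _).mpr k.2
  -- Θ : restriction-to-K homomorphism on cocycles
  have θaux : ∀ (c : X → M) (k k' : ↥K),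
      d c ((k : FreeGroup X) * (k' : FreeGroup X)) 1 = d c k 1 * d c k' 1 := by
    intro c k k'
    rw [dmul, Pi.mul_apply, φA_apply, hmkK]
    simp
  set θf : (X → M) → (↥K →* C2) := fun c => MonoidHom.mk'
    (fun k => d c (k : FreeGroup X) 1) (fun k k' => θaux c k k') with hθf
  have dadd : ∀ c c' f, d (c * c') f = d c f * d c' f := by
    intro c c' f
    have haux : ∀ (a b : FreeGroup X),
        (⟨d c (a * b) * d c' (a * b), a * b⟩ : M ⋊[φA] FreeGroup X) =
          (⟨d c a * d c' a, a⟩ : M ⋊[φA] FreeGroup X) * ⟨d c b * d c' b, b⟩ := by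
      intro a b
      have h1 : (⟨d c a * d c' a, a⟩ : M ⋊[φA] FreeGroup X) * ⟨d c b * d c' b, b⟩ =
          ⟨(d c a * d c' a) * φA a (d c b * d c' b), a * b⟩ := rfl
      rw [h1]
      congr 1
      rw [dmul, dmul, map_mul]
      exact mul_mul_mul_comm _ _ _ _
    have hA : Φ (c * c') = MonoidHom.mk'
        (fun f => (⟨d c f * d c' f, f⟩ : M ⋊[φA] FreeGroup X)) haux := by
      apply FreeGroup.ext_hom
      intro x
      show Φ (c * c') (FreeGroup.of x) = _
      rw [hΦ]
      simp only [FreeGroup.lift_apply_of, MonoidHom.mk'_apply, dof]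
      rfl
    have := congrArg SemidirectProduct.left (DFunLike.congr_fun hA f)
    simpa using this
  set Θ : (X → M) →* (↥K →* C2) := MonoidHom.mk' θf (by
    intro c c'
    ext k
    show d (c * c') (k : FreeGroup X) 1 = d c k 1 * d c' k 1
    rw [dadd]
    rfl) with hΘ
  -- the coboundary map
  have Ψaux : ∀ (m m' : M) , (fun x => φA (FreeGroup.of x) (m * m') * (m * m')⁻¹) =
      (fun x => φA (FreeGroup.of x) m * m⁻¹) * (fun x => φA (FreeGroup.of x) m' * m'⁻¹) := by
    intro m m'
    funext x
    show φA (FreeGroup.of x) (m * m') * (m * m')⁻¹ = _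
    rw [map_mul, mul_inv]
    exact mul_mul_mul_comm _ _ _ _
  set ΨM : M →* (X → M) := MonoidHom.mk'
    (fun m => fun x => φA (FreeGroup.of x) m * m⁻¹) Ψaux with hΨM
  -- coboundaries are cocycles vanishing on `K`
  have cob : ∀ (m : M) (f : FreeGroup X), d (ΨM m) f = φA f m * m⁻¹ := by
    intro m f
    have haux : ∀ a b : FreeGroup X,
        (⟨φA (a * b) m * m⁻¹, a * b⟩ : M ⋊[φA] FreeGroup X) =
          (⟨φA a m * m⁻¹, a⟩ : M ⋊[φA] FreeGroup X) * ⟨φA b m * m⁻¹, b⟩ := by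
      intro a b
      have h1 : (⟨φA a m * m⁻¹, a⟩ : M ⋊[φA] FreeGroup X) * ⟨φA b m * m⁻¹, b⟩ =
          ⟨(φA a m * m⁻¹) * φA a (φA b m * m⁻¹), a * b⟩ := rfl
      rw [h1]
      congr 1
      have e1 : φA a (φA b m * m⁻¹) = φA a (φA b m) * φA a m⁻¹ := map_mul (φA a) _ _
      have e2 : φA a m⁻¹ = (φA a m)⁻¹ := map_inv (φA a) m
      rw [e1, e2, φA_autmul]
      exact (comm_aux (φA a m) (φA (a * b) m) m).symm
    have hA : Φ (ΨM m) = MonoidHom.mk'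
        (fun f => (⟨φA f m * m⁻¹, f⟩ : M ⋊[φA] FreeGroup X)) haux := by
      apply FreeGroup.ext_hom
      intro x
      show Φ (ΨM m) (FreeGroup.of x) = _
      rw [hΦ]
      simp only [FreeGroup.lift_apply_of, MonoidHom.mk'_apply]
      rfl
    have := congrArg SemidirectProduct.left (DFunLike.congr_fun hA f)
    simpa using this
  -- kernel of Θ equals range of ΨM
  have hkerΘ : MonoidHom.ker Θ = MonoidHom.range ΨM := by
    ext c
    constructor
    · intro hc
      have hc' : ∀ k : ↥K, d c (k : FreeGroup X) 1 = 1 := by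
        intro k
        have h1 : Θ c = 1 := hc
        exact DFunLike.congr_fun h1 k
      set m : M := fun q => (d c q.out q)⁻¹ with hm
      have key : ∀ (f : FreeGroup X) (q : Q), d c f q = m ((mkQ f)⁻¹ * q) * (m q)⁻¹ := by
        intro f q
        set q₁ : Q := (mkQ f)⁻¹ * q with hq₁
        have hmku : mkQ q.out = q := QuotientGroup.out_eq' q
        have hmku' : mkQ q₁.out = q₁ := QuotientGroup.out_eq' q₁
        have hk' : q₁.out⁻¹ * f⁻¹ * q.out ∈ K := by
          rw [← QuotientGroup.eq_one_iff (N := K)]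
          show mkQ (q₁.out⁻¹ * f⁻¹ * q.out) = 1
          rw [map_mul, map_mul, map_inv, map_inv, hmku, hmku', hq₁]
          group
        have h0 : d c (q₁.out⁻¹ * f⁻¹ * q.out) 1 = 1 := hc' ⟨_, hk'⟩
        have eeq : f⁻¹ * q.out = q₁.out * (q₁.out⁻¹ * f⁻¹ * q.out) := by group
        have harg : (mkQ f⁻¹)⁻¹ * q₁ = q := by
          rw [map_inv, inv_inv, hq₁]
          group
        have lhs : d c (f⁻¹ * q.out) q₁ = (d c f q)⁻¹ * d c q.out q := by
          rw [dmul, dinv, Pi.mul_apply, Pi.inv_apply, φA_apply, φA_apply, harg]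
        have rhs : d c (q₁.out * (q₁.out⁻¹ * f⁻¹ * q.out)) q₁ = d c q₁.out q₁ := by
          rw [dmul, Pi.mul_apply, φA_apply, hmku']
          have : q₁⁻¹ * q₁ = 1 := inv_mul_cancel q₁
          rw [this, h0, mul_one]
        have e3 : (d c f q)⁻¹ * d c q.out q = d c q₁.out q₁ := by
          rw [← lhs, ← rhs, ← eeq]
        have hmq : m q = (d c q.out q)⁻¹ := rfl
        have hmq₁ : m ((mkQ f)⁻¹ * q) = (d c q₁.out q₁)⁻¹ := rfl
        rw [hmq, hmq₁, ← e3]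
        have hgen : ∀ a b : C2, a = (a⁻¹ * b)⁻¹ * b⁻¹⁻¹ := by
          intro a b
          rw [mul_inv_rev, inv_inv, inv_inv, mul_assoc, mul_comm a b, ← mul_assoc,
            inv_mul_cancel, one_mul]
        exact hgen _ _
      refine ⟨m, ?_⟩
      funext x
      show (fun x => φA (FreeGroup.of x) m * m⁻¹) x = c x
      funext q
      show φA (FreeGroup.of x) m q * (m q)⁻¹ = c x q
      rw [φA_apply]
      have : c x q = d c (FreeGroup.of x) q := by rw [dof]
      rw [this, key (FreeGroup.of x) q]
    · rintro ⟨m, rfl⟩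
      show θf (ΨM m) = 1
      ext k
      show d (ΨM m) (k : FreeGroup X) 1 = 1
      rw [cob, Pi.mul_apply, Pi.inv_apply, φA_apply, hmkK]
      simp
  -- counting
  have hMcard : Nat.card M = 2 ^ K.index := by
    rw [hM, Nat.card_fun, card_C2, ← Subgroup.index_eq_card]
  have hdom : Nat.card (X → M) = 2 ^ (K.index * Nat.card X) := by
    rw [Nat.card_fun, hMcard, ← pow_mul]
  have h1 : Nat.card (X → M) = Nat.card (MonoidHom.range Θ) * Nat.card (MonoidHom.ker Θ) := by
    rw [Subgroup.card_eq_card_quotient_mul_card_subgroup (MonoidHom.ker Θ)]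
    congr 1
    exact Nat.card_congr (QuotientGroup.quotientKerEquivRange Θ).toEquiv
  have h2 : 2 * Nat.card (MonoidHom.ker Θ) ≤ 2 ^ K.index := by
    rw [hkerΘ]
    have h3 : Nat.card M = Nat.card (MonoidHom.range ΨM) * Nat.card (MonoidHom.ker ΨM) := by
      rw [Subgroup.card_eq_card_quotient_mul_card_subgroup (MonoidHom.ker ΨM)]
      congr 1
      exact Nat.card_congr (QuotientGroup.quotientKerEquivRange ΨM).toEquiv
    have hconstmem : ∀ a : C2, (fun _ : Q => a) ∈ MonoidHom.ker ΨM := by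
      intro a
      rw [MonoidHom.mem_ker]
      show (fun x => φA (FreeGroup.of x) (fun _ => a) * (fun _ : Q => a)⁻¹) = 1
      funext x
      funext q
      show φA (FreeGroup.of x) (fun _ => a) q * ((fun _ : Q => a) q)⁻¹ = 1
      rw [φA_apply]
      simp
    have h4 : 2 ≤ Nat.card (MonoidHom.ker ΨM) := by
      have hinj : Function.Injective
          (fun a : C2 => (⟨fun _ => a, hconstmem a⟩ : ↥(MonoidHom.ker ΨM))) := by
        intro a b hab
        have := congrFun (congrArg Subtype.val hab) ((1 : Q))
        exact this
      calc 2 = Nat.card C2 := card_C2.symm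
        _ ≤ Nat.card (MonoidHom.ker ΨM) := Nat.card_le_card_of_injective _ hinj
    calc 2 * Nat.card (MonoidHom.range ΨM)
        ≤ Nat.card (MonoidHom.ker ΨM) * Nat.card (MonoidHom.range ΨM) :=
          Nat.mul_le_mul_right _ h4
      _ = Nat.card M := by rw [h3, mul_comm]
      _ = 2 ^ K.index := hMcard
  -- Hom(K, C2) is finite and has cardinality 2 ^ #Generators
  haveI hFGF : Group.FG (FreeGroup X) := by
    rw [Group.fg_iff]
    exact ⟨Set.range FreeGroup.of, FreeGroup.closure_range_of X, Set.finite_range _⟩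
  haveI : K.FiniteIndex := ⟨hK⟩
  haveI : Group.FG ↥K := Subgroup.fg_of_index_ne_zero K
  haveI hfinhom : Finite (↥K →* C2) := by
    obtain ⟨S, hScl, hSfin⟩ := Group.fg_iff.mp (inferInstance : Group.FG ↥K)
    haveI := hSfin.to_subtype
    have hinj : Function.Injective (fun (ψ : ↥K →* C2) => (fun s : S => ψ s)) := by
      intro ψ ψ' h
      ext x
      have hEq : Set.EqOn ψ ψ' S := fun s hs => congrFun h ⟨s, hs⟩
      have := MonoidHom.eqOn_closure hEq
      rw [hScl] at this
      exact this (Subgroup.mem_top x)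
    exact Finite.of_injective _ hinj
  haveI hBfin : Finite (IsFreeGroup.Generators ↥K) := by
    set B := IsFreeGroup.Generators ↥K with hB
    show Finite B
    by_contra hBinf
    rw [not_finite_iff_infinite] at hBinf
    haveI : Finite (B → C2) :=
      Finite.of_equiv _ (IsFreeGroup.lift (G := ↥K) (H := C2)).symm
    have hinj2 : Function.Injective
        (fun b : B => (fun b' : B => if b' = b then Multiplicative.ofAdd (1 : ZMod 2) else 1)) := by
      intro a b hab
      by_contra hne
      have := congrFun hab a
      simp only [if_pos rfl, if_neg hne] at this
      have h10 : (1 : ZMod 2) = 0 := by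
        have h2 := congrArg Multiplicative.toAdd this
        simpa using h2
      exact one_ne_zero h10
    haveI : Infinite (B → C2) := Infinite.of_injective _ hinj2
    exact not_finite (B → C2)
  have hcardHom : Nat.card (↥K →* C2) = 2 ^ Nat.card (IsFreeGroup.Generators ↥K) := by
    rw [Nat.card_congr (IsFreeGroup.lift (G := ↥K) (H := C2)).symm, Nat.card_fun, card_C2]
  have hrange : Nat.card (MonoidHom.range Θ) ≤ 2 ^ Nat.card (IsFreeGroup.Generators ↥K) := by
    rw [← hcardHom]
    exact Nat.card_le_card_of_injective _ Subtype.val_injective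
  have final : 2 ^ (K.index * Nat.card X + 1) ≤
      2 ^ (Nat.card (IsFreeGroup.Generators ↥K) + K.index) := by
    calc 2 ^ (K.index * Nat.card X + 1) = Nat.card (X → M) * 2 := by rw [hdom, pow_succ]
      _ = Nat.card (MonoidHom.range Θ) * (2 * Nat.card (MonoidHom.ker Θ)) := by rw [h1]; ring
      _ ≤ 2 ^ Nat.card (IsFreeGroup.Generators ↥K) * 2 ^ K.index := Nat.mul_le_mul hrange h2
      _ = 2 ^ (Nat.card (IsFreeGroup.Generators ↥K) + K.index) := (pow_add 2 _ _).symm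
  refine ⟨hBfin, ?_⟩
  have := (Nat.pow_le_pow_iff_right (a := 2) (by norm_num)).mp final
  omega

end RankBound


/-- A presentation of `G` (given by a projection `π : F(X) → G` and relator set `R`) is
`p`-regular if for every `r ∈ R` admitting a `p`-th root `s` in `F(X)`, the image `π s`
survives in some quotient of `G` of `p`-power order. -/
def IsPRegular (p : ℕ) {X G : Type*} [Group G] (π : FreeGroup X →* G)
    (R : Set (FreeGroup X)) : Prop :=
  ∀ r ∈ R, ∀ s : FreeGroup X, s ^ p = r →
    ∃ N : Subgroup G, N.Normal ∧ (∃ k : ℕ, N.index = p ^ k) ∧ π s ∉ N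


section MainProof

open Subgroup

/-- Let `(X,R)` be a finite `p`-regular presentation of `G`.  Then there exist a normal
subgroup `H` of `G` of `p`-power index and a finite presentation of `H` with `g` generators
and `r` relators such that `g - r - 1 ≥ [G:H]·def_p(X,R)`; in particular
`def(H) - 1 ≥ [G:H]·def_p(X,R)` for the deficiency `def(H)` (the supremum of `g - r` over
all finite presentations of `H`). -/
theorem stmt11 (p : ℕ) (hp : p.Prime) (X : Type) [Finite X]
    (R : Finset (FreeGroup X)) (hR : ∀ r ∈ R, r ≠ 1)
    (G : Type) [Group G] (π : FreeGroup X →* G) (hsurj : Function.Surjective π)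
    (hker : MonoidHom.ker π = Subgroup.normalClosure (R : Set (FreeGroup X)))
    (hreg : IsPRegular p π (R : Set (FreeGroup X))) :
    ∃ H : Subgroup G, H.Normal ∧ (∃ k : ℕ, H.index = p ^ k) ∧
      (∃ (g : ℕ) (Rel : Finset (FreeGroup (Fin g))) (φ : FreeGroup (Fin g) →* H),
        Function.Surjective φ ∧
        MonoidHom.ker φ = Subgroup.normalClosure (Rel : Set (FreeGroup (Fin g))) ∧
        (H.index : ℝ) * ((Nat.card X : ℝ) - 1 - ∑ r ∈ R, ((p : ℝ) ^ epIn p ⊤ r)⁻¹) ≤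
          (g : ℝ) - Rel.card - 1) ∧
      (H.index : ℝ) * ((Nat.card X : ℝ) - 1 - ∑ r ∈ R, ((p : ℝ) ^ epIn p ⊤ r)⁻¹) ≤
        sSup {d : ℝ | ∃ (g : ℕ) (Rel : Finset (FreeGroup (Fin g)))
            (φ : FreeGroup (Fin g) →* H),
          Function.Surjective φ ∧
          MonoidHom.ker φ = Subgroup.normalClosure (Rel : Set (FreeGroup (Fin g))) ∧
          d = (g : ℝ) - Rel.card} - 1 := by
  classical
  choose v hv using fun r : FreeGroup X => epIn_exists_root p r
  -- choose the normal subgroups provided by p-regularity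
  have hNex : ∀ r : FreeGroup X, ∃ N : Subgroup G, N.Normal ∧ (∃ k, N.index = p ^ k) ∧
      (r ∈ R → 0 < epIn p ⊤ r → π ((v r) ^ p ^ (epIn p ⊤ r - 1)) ∉ N) := by
    intro r
    by_cases h : r ∈ R ∧ 0 < epIn p ⊤ r
    · have hs : ((v r) ^ p ^ (epIn p ⊤ r - 1)) ^ p = r := by
        rw [← pow_mul, ← pow_succ]
        have he : epIn p ⊤ r - 1 + 1 = epIn p ⊤ r := by omega
        rw [he]
        exact hv r
      obtain ⟨N, h1, h2, h3⟩ := hreg r (by exact_mod_cast h.1) _ hs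
      exact ⟨N, h1, h2, fun _ _ => h3⟩
    · exact ⟨⊤, inferInstance, ⟨0, by simp [Subgroup.index_top]⟩,
        fun h1 h2 => absurd ⟨h1, h2⟩ h⟩
  choose N hN1 hN2 hN3 using hNex
  set H : Subgroup G := R.inf N with hHdef
  haveI HNormal : H.Normal := finset_inf_normal R N hN1
  obtain ⟨kH, hkH⟩ := finset_inf_index_prime_pow hp R N hN1 hN2
  have hHle : ∀ r ∈ R, H ≤ N r := fun r hr => Finset.inf_le hr
  have hn0 : H.index ≠ 0 := by rw [hkH]; exact pow_ne_zero _ hp.pos.ne'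
  set K : Subgroup (FreeGroup X) := Subgroup.comap π H with hKdef
  haveI hKnormal : K.Normal := HNormal.comap π
  have hKind : K.index = H.index := H.index_comap_of_surjective hsurj
  have hK0 : K.index ≠ 0 := by rw [hKind]; exact hn0
  set mkQ : FreeGroup X →* FreeGroup X ⧸ K := QuotientGroup.mk' K with hmkQ
  haveI : Finite (FreeGroup X ⧸ K) :=
    Nat.finite_of_card_ne_zero (by rw [← Subgroup.index_eq_card]; exact hK0)
  have hcardQ : Nat.card (FreeGroup X ⧸ K) = H.index := by
    rw [← Subgroup.index_eq_card, hKind]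
  have hRker : ∀ r ∈ R, π r = 1 := by
    intro r hr
    have hmem : r ∈ MonoidHom.ker π := by
      rw [hker]
      exact Subgroup.subset_normalClosure (by exact_mod_cast hr)
    exact hmem
  have hrK : ∀ r ∈ R, r ∈ K := by
    intro r hr
    show π r ∈ H
    rw [hRker r hr]
    exact one_mem H
  -- the image of the maximal root of r has order exactly p ^ e_p(r) in the quotient
  have horder : ∀ r ∈ R, orderOf (mkQ (v r)) = p ^ epIn p ⊤ r := by
    intro r hr
    have hpow1 : mkQ (v r) ^ p ^ epIn p ⊤ r = 1 := by
      rw [← map_pow, hv r]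
      exact (QuotientGroup.eq_one_iff r).mpr (hrK r hr)
    obtain ⟨i, hile, hoi⟩ := (Nat.dvd_prime_pow hp).mp (orderOf_dvd_of_pow_eq_one hpow1)
    rcases eq_or_lt_of_le hile with heq | hlt
    · rw [hoi, heq]
    · exfalso
      have hepos : 0 < epIn p ⊤ r := lt_of_le_of_lt (Nat.zero_le i) hlt
      have hidvd : orderOf (mkQ (v r)) ∣ p ^ (epIn p ⊤ r - 1) := by
        rw [hoi]; exact pow_dvd_pow p (by omega)
      have hpow2 : mkQ ((v r) ^ p ^ (epIn p ⊤ r - 1)) = 1 := by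
        rw [map_pow]; exact orderOf_dvd_iff_pow_eq_one.mp hidvd
      have hmem : (v r) ^ p ^ (epIn p ⊤ r - 1) ∈ K := (QuotientGroup.eq_one_iff _).mp hpow2
      exact hN3 r hr hepos (hHle r hr hmem)
  -- coset spaces under the cyclic subgroups generated by the roots
  set Zr : FreeGroup X → Subgroup (FreeGroup X ⧸ K) :=
    fun r => Subgroup.zpowers (mkQ (v r)) with hZrdef
  set ρ : (r : FreeGroup X) → ((FreeGroup X ⧸ K) ⧸ Zr r) → FreeGroup X :=
    fun r w => (Quotient.out w).out with hρdef
  have hmkρ : ∀ r (w : (FreeGroup X ⧸ K) ⧸ Zr r), mkQ (ρ r w) = Quotient.out w :=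
    fun r w => QuotientGroup.out_eq' _
  have hWcard : ∀ r ∈ R,
      Nat.card ((FreeGroup X ⧸ K) ⧸ Zr r) * p ^ epIn p ⊤ r = H.index := by
    intro r hr
    have h1 := Subgroup.card_eq_card_quotient_mul_card_subgroup (Zr r)
    rw [hcardQ] at h1
    rw [h1]
    congr 1
    rw [hZrdef]
    rw [Nat.card_zpowers, horder r hr]
  have hTmem : ∀ r, r ∈ R → ∀ w : (FreeGroup X ⧸ K) ⧸ Zr r,
      ρ r w * r * (ρ r w)⁻¹ ∈ K := by
    intro r hr w
    show π _ ∈ H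
    rw [map_mul, map_mul, map_inv, hRker r hr, mul_one, mul_inv_cancel]
    exact one_mem H
  set Trel : Finset ↥K := R.attach.biUnion (fun r =>
    letI : Fintype ((FreeGroup X ⧸ K) ⧸ Zr ↑r) := Fintype.ofFinite _
    Finset.univ.image (fun w : (FreeGroup X ⧸ K) ⧸ Zr ↑r =>
      (⟨ρ ↑r w * ↑r * (ρ ↑r w)⁻¹, hTmem ↑r r.2 w⟩ : ↥K))) with hTreldef
  -- cardinality of the relator set
  have hTcard : (Trel.card : ℝ) ≤
      (H.index : ℝ) * ∑ r ∈ R, ((p : ℝ) ^ epIn p ⊤ r)⁻¹ := by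
    have h1 : Trel.card ≤ ∑ r ∈ R.attach, Nat.card ((FreeGroup X ⧸ K) ⧸ Zr ↑r) := by
      refine le_trans Finset.card_biUnion_le (Finset.sum_le_sum ?_)
      intro r _
      letI : Fintype ((FreeGroup X ⧸ K) ⧸ Zr ↑r) := Fintype.ofFinite _
      calc (Finset.univ.image (fun w : (FreeGroup X ⧸ K) ⧸ Zr ↑r =>
            (⟨ρ ↑r w * ↑r * (ρ ↑r w)⁻¹, hTmem ↑r r.2 w⟩ : ↥K))).card
          ≤ Finset.univ.card := Finset.card_image_le
        _ = Nat.card ((FreeGroup X ⧸ K) ⧸ Zr ↑r) := by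
            rw [Finset.card_univ, Nat.card_eq_fintype_card]
    have h2 : ∀ r ∈ R, (Nat.card ((FreeGroup X ⧸ K) ⧸ Zr r) : ℝ) =
        (H.index : ℝ) * ((p : ℝ) ^ epIn p ⊤ r)⁻¹ := by
      intro r hr
      have h3 := hWcard r hr
      have hpne : ((p : ℝ) ^ epIn p ⊤ r) ≠ 0 :=
        pow_ne_zero _ (by exact_mod_cast hp.pos.ne')
      field_simp
      exact_mod_cast h3
    calc (Trel.card : ℝ) ≤ ∑ r ∈ R.attach, (Nat.card ((FreeGroup X ⧸ K) ⧸ Zr ↑r) : ℝ) := by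
          exact_mod_cast h1
      _ = ∑ r ∈ R, (Nat.card ((FreeGroup X ⧸ K) ⧸ Zr r) : ℝ) := by
          rw [Finset.sum_attach R (fun r => (Nat.card ((FreeGroup X ⧸ K) ⧸ Zr r) : ℝ))]
      _ = ∑ r ∈ R, (H.index : ℝ) * ((p : ℝ) ^ epIn p ⊤ r)⁻¹ :=
          Finset.sum_congr rfl h2
      _ = (H.index : ℝ) * ∑ r ∈ R, ((p : ℝ) ^ epIn p ⊤ r)⁻¹ := (Finset.mul_sum _ _ _).symm
  -- membership description of Trel
  have hTdesc : ∀ t : ↥K, t ∈ Trel → ∃ r, ∃ hr : r ∈ R, ∃ w : (FreeGroup X ⧸ K) ⧸ Zr r,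
      (t : FreeGroup X) = ρ r w * r * (ρ r w)⁻¹ := by
    intro t ht
    rw [hTreldef, Finset.mem_biUnion] at ht
    obtain ⟨r, -, hmem⟩ := ht
    rw [Finset.mem_image] at hmem
    obtain ⟨w, -, hw⟩ := hmem
    exact ⟨↑r, r.2, w, by rw [← hw]⟩
  -- the normal closure identity
  have hNCle : Subgroup.normalClosure ((Trel : Set ↥K)) ≤
      (Subgroup.normalClosure (R : Set (FreeGroup X))).subgroupOf K := by
    refine Subgroup.normalClosure_le_normal ?_
    intro t ht
    obtain ⟨r, hr, w, hteq⟩ := hTdesc t ht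
    have hval : (t : FreeGroup X) ∈ Subgroup.normalClosure (R : Set (FreeGroup X)) := by
      rw [hteq]
      exact Subgroup.normalClosure_normal.conj_mem r
        (Subgroup.subset_normalClosure (by exact_mod_cast hr)) (ρ r w)
    exact Subgroup.mem_subgroupOf.mpr hval
  have hmapge : Subgroup.normalClosure (R : Set (FreeGroup X)) ≤
      Subgroup.map K.subtype (Subgroup.normalClosure (Trel : Set ↥K)) := by
    show Subgroup.closure (Group.conjugatesOfSet (R : Set (FreeGroup X))) ≤ _
    rw [Subgroup.closure_le]
    intro b hb
    obtain ⟨r, hrR', hconj⟩ := Group.mem_conjugatesOfSet_iff.mp hb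
    have hrR : r ∈ R := by exact_mod_cast hrR'
    obtain ⟨f, hf⟩ := isConj_iff.mp hconj
    set w : (FreeGroup X ⧸ K) ⧸ Zr r := QuotientGroup.mk (mkQ f) with hwdef
    obtain ⟨z, hz⟩ := QuotientGroup.mk_out_eq_mul (Zr r) (mkQ f)
    obtain ⟨mz, hmz⟩ := Subgroup.mem_zpowers_iff.mp z.2
    have hmku : mkQ (ρ r w) = mkQ f * (mkQ (v r)) ^ mz := by
      rw [hmkρ, hwdef, hz, hmz]
    have hmkuv : mkQ (ρ r w * (v r) ^ (-mz)) = mkQ f := by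
      rw [map_mul, map_zpow, hmku, zpow_neg, mul_assoc, mul_inv_cancel, mul_one]
    have hκK : f * (ρ r w * (v r) ^ (-mz))⁻¹ ∈ K := by
      have : mkQ (f * (ρ r w * (v r) ^ (-mz))⁻¹) = 1 := by
        rw [map_mul, map_inv, hmkuv, mul_inv_cancel]
      exact (QuotientGroup.eq_one_iff _).mp this
    have hcomm : ∀ j : ℤ, (v r) ^ j * r * ((v r) ^ j)⁻¹ = r := by
      intro j
      have hc0 : Commute (v r) r := by
        conv_rhs => rw [← hv r]
        exact Commute.pow_right (Commute.refl (v r)) _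
      have hc : Commute ((v r) ^ j) r := hc0.zpow_left j
      rw [hc.eq, mul_inv_cancel_right]
    have htT : (⟨ρ r w * r * (ρ r w)⁻¹, hTmem r hrR w⟩ : ↥K) ∈ Trel := by
      rw [hTreldef, Finset.mem_biUnion]
      refine ⟨⟨r, hrR⟩, Finset.mem_attach _ _, ?_⟩
      letI : Fintype ((FreeGroup X ⧸ K) ⧸ Zr r) := Fintype.ofFinite _
      exact Finset.mem_image.mpr ⟨w, Finset.mem_univ w, rfl⟩
    set κ : ↥K := ⟨f * (ρ r w * (v r) ^ (-mz))⁻¹, hκK⟩ with hκdef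
    have hbval : b = ((κ * ⟨ρ r w * r * (ρ r w)⁻¹, hTmem r hrR w⟩ * κ⁻¹ : ↥K) : FreeGroup X) := by
      have hval : ((κ * ⟨ρ r w * r * (ρ r w)⁻¹, hTmem r hrR w⟩ * κ⁻¹ : ↥K) : FreeGroup X) =
          (f * (ρ r w * (v r) ^ (-mz))⁻¹) * (ρ r w * r * (ρ r w)⁻¹) *
            (f * (ρ r w * (v r) ^ (-mz))⁻¹)⁻¹ := rfl
      rw [hval, ← hf]
      calc f * r * f⁻¹ = f * ((v r) ^ mz * r * ((v r) ^ mz)⁻¹) * f⁻¹ := by rw [hcomm mz]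
        _ = (f * (ρ r w * (v r) ^ (-mz))⁻¹) * (ρ r w * r * (ρ r w)⁻¹) *
            (f * (ρ r w * (v r) ^ (-mz))⁻¹)⁻¹ := by group
    rw [hbval]
    exact ⟨_, Subgroup.normalClosure_normal.conj_mem _
      (Subgroup.subset_normalClosure htT) κ, rfl⟩
  have hNCeq : Subgroup.normalClosure ((Trel : Set ↥K)) =
      (Subgroup.normalClosure (R : Set (FreeGroup X))).subgroupOf K := by
    refine le_antisymm hNCle ?_
    intro x hx
    rw [Subgroup.mem_subgroupOf] at hx
    obtain ⟨y, hy, hyx⟩ := hmapge hx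
    have hxy : y = x := Subtype.ext hyx
    rwa [← hxy]
  -- the presentation of H
  set resφ : ↥K →* ↥H := (π.comp K.subtype).codRestrict H (fun x => x.2) with hresdef
  have hres_surj : Function.Surjective resφ := by
    intro h
    obtain ⟨f, hf⟩ := hsurj ↑h
    have hfK : f ∈ K := by show π f ∈ H; rw [hf]; exact h.2
    exact ⟨⟨f, hfK⟩, Subtype.ext hf⟩
  have hres_ker : MonoidHom.ker resφ = Subgroup.normalClosure ((Trel : Set ↥K)) := by
    have hk : MonoidHom.ker resφ = MonoidHom.ker (π.comp K.subtype) :=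
      MonoidHom.ker_codRestrict _ _ _
    rw [hk, ← MonoidHom.comap_ker, hker]
    exact hNCeq.symm
  obtain ⟨hBfin, hBcard⟩ := generators_bound K (by rw [hKind]; exact hn0)
  haveI := hBfin
  haveI : Fintype (IsFreeGroup.Generators ↥K) := Fintype.ofFinite _
  have hcard_eq : Fintype.card (IsFreeGroup.Generators ↥K) =
      Nat.card (IsFreeGroup.Generators ↥K) := Nat.card_eq_fintype_card.symm
  set g : ℕ := Nat.card (IsFreeGroup.Generators ↥K) with hgdef
  set E : FreeGroup (Fin g) ≃* ↥K :=
    (FreeGroup.freeGroupCongr (Fintype.equivFinOfCardEq hcard_eq).symm).trans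
      (IsFreeGroup.mulEquiv ↥K) with hEdef
  set φfin : FreeGroup (Fin g) →* ↥H := resφ.comp E.toMonoidHom with hφfindef
  have hφfin_surj : Function.Surjective φfin := hres_surj.comp E.surjective
  set Rel : Finset (FreeGroup (Fin g)) := Trel.image (fun t => E.symm t) with hReldef
  have hRelcard : Rel.card ≤ Trel.card := Finset.card_image_le
  have hφfin_ker : MonoidHom.ker φfin =
      Subgroup.normalClosure (Rel : Set (FreeGroup (Fin g))) := by
    rw [hφfindef, ← MonoidHom.comap_ker, hres_ker]
    have h2 : (↑Rel : Set (FreeGroup (Fin g))) = ⇑E ⁻¹' (Trel : Set ↥K) := by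
      rw [hReldef, Finset.coe_image]
      exact Equiv.image_eq_preimage_symm E.symm.toEquiv (Trel : Set ↥K)
    rw [h2, Subgroup.comap_normalClosure _ E]
    rfl
  -- the numerical inequality
  have hmain : (H.index : ℝ) * ((Nat.card X : ℝ) - 1 - ∑ r ∈ R, ((p : ℝ) ^ epIn p ⊤ r)⁻¹) ≤
      (g : ℝ) - Rel.card - 1 := by
    have hgR : (H.index : ℝ) * (Nat.card X : ℝ) + 1 ≤ (g : ℝ) + H.index := by
      have := hBcard
      rw [hKind] at this
      exact_mod_cast this
    have hRelR : (Rel.card : ℝ) ≤ (H.index : ℝ) * ∑ r ∈ R, ((p : ℝ) ^ epIn p ⊤ r)⁻¹ := by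
      refine le_trans ?_ hTcard
      exact_mod_cast hRelcard
    have hexp : (H.index : ℝ) * ((Nat.card X : ℝ) - 1 - ∑ r ∈ R, ((p : ℝ) ^ epIn p ⊤ r)⁻¹) =
        (H.index : ℝ) * (Nat.card X : ℝ) - H.index -
          (H.index : ℝ) * ∑ r ∈ R, ((p : ℝ) ^ epIn p ⊤ r)⁻¹ := by ring
    linarith
  refine ⟨H, HNormal, ⟨kH, hkH⟩, ⟨g, Rel, φfin, hφfin_surj, hφfin_ker, hmain⟩, ?_⟩
  have hBdd := deficiency_bddAbove g φfin hφfin_surj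
  have hmem : ((g : ℝ) - Rel.card) ∈ {d : ℝ | ∃ (g' : ℕ) (Rel' : Finset (FreeGroup (Fin g')))
      (φ : FreeGroup (Fin g') →* ↥H),
      Function.Surjective φ ∧
      MonoidHom.ker φ = Subgroup.normalClosure (Rel' : Set (FreeGroup (Fin g'))) ∧
      ((g : ℝ) - Rel.card) = (g' : ℝ) - Rel'.card} :=
    ⟨g, Rel, φfin, hφfin_surj, hφfin_ker, rfl⟩
  have hle := le_csSup hBdd hmem
  linarith

end MainProof
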